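/- Assume F(0) = 0 and R'(0) = 0. If T ∈ ℝ satisfies F(T) = 0 and R'(T) = 0, then F and R are periodic with period 2T: for all t ∈ ℝ, F(t + 2T) = F(t) and R(t + 2T) = R(t). -/

import Mathlib

open Real Set Filter

/-- The vector field of the first-order system: state `(F, F', R, R')`. -/
noncomputable def odeVF (a : ℝ) (p : ℝ × ℝ × ℝ × ℝ) : ℝ × ℝ × ℝ × ℝ :=
  (p.2.1, -400 * p.1 / Real.sqrt (p.2.2.1 ^ 2 + 4 * p.1 ^ 2) ^ 3,
   p.2.2.2,
   100 * a ^ 2 / p.2.2.1 ^ 3 - 25 / p.2.2.1 ^ 2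
     - 200 * p.2.2.1 / Real.sqrt (p.2.2.1 ^ 2 + 4 * p.1 ^ 2) ^ 3)

lemma odeVF_contDiffAt (a : ℝ) (p : ℝ × ℝ × ℝ × ℝ) (hp : 0 < p.2.2.1) :
    ContDiffAt ℝ 1 (odeVF a) p := by
  have h1 : ContDiffAt ℝ 1 (fun q : ℝ × ℝ × ℝ × ℝ => q.1) p := contDiffAt_fst
  have h2 : ContDiffAt ℝ 1 (fun q : ℝ × ℝ × ℝ × ℝ => q.2.1) p := by fun_prop
  have h3 : ContDiffAt ℝ 1 (fun q : ℝ × ℝ × ℝ × ℝ => q.2.2.1) p := by fun_prop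
  have h4 : ContDiffAt ℝ 1 (fun q : ℝ × ℝ × ℝ × ℝ => q.2.2.2) p := by fun_prop
  have harg : ContDiffAt ℝ 1 (fun q : ℝ × ℝ × ℝ × ℝ => q.2.2.1 ^ 2 + 4 * q.1 ^ 2) p :=
    (h3.pow 2).add ((contDiffAt_const (c := (4:ℝ))).mul (h1.pow 2))
  have hargpos : 0 < p.2.2.1 ^ 2 + 4 * p.1 ^ 2 := by positivity
  have hsqrt : ContDiffAt ℝ 1
      (fun q : ℝ × ℝ × ℝ × ℝ => Real.sqrt (q.2.2.1 ^ 2 + 4 * q.1 ^ 2)) p :=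
    (Real.contDiffAt_sqrt hargpos.ne').comp p harg
  have hden : ContDiffAt ℝ 1
      (fun q : ℝ × ℝ × ℝ × ℝ => Real.sqrt (q.2.2.1 ^ 2 + 4 * q.1 ^ 2) ^ 3) p :=
    hsqrt.pow 3
  have hdenne : Real.sqrt (p.2.2.1 ^ 2 + 4 * p.1 ^ 2) ^ 3 ≠ 0 := by
    have := Real.sqrt_pos.mpr hargpos; positivity
  refine ContDiffAt.prodMk h2 (ContDiffAt.prodMk ?_ (ContDiffAt.prodMk h4 ?_))
  · exact ((contDiffAt_const (c := (-400:ℝ))).mul h1).div hden hdenne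
  · refine ContDiffAt.sub (ContDiffAt.sub ?_ ?_) ?_
    · exact (contDiffAt_const (c := 100 * a ^ 2)).div (h3.pow 3) (by positivity)
    · exact (contDiffAt_const (c := (25:ℝ))).div (h3.pow 2) (by positivity)
    · exact ((contDiffAt_const (c := (200:ℝ))).mul h3).div hden hdenne

/-- Reflection symmetry: if `F c = 0` and `R' c = 0`, then `F` is odd and `R` even
about `c`. -/
lemma odd_reflect
    (a : ℝ) (F R : ℝ → ℝ)
    (hF : ContDiff ℝ 2 F) (hR : ContDiff ℝ 2 R)
    (hRpos : ∀ t, 0 < R t)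
    (hFode : ∀ t, deriv (deriv F) t =
      -400 * F t / Real.sqrt (R t ^ 2 + 4 * F t ^ 2) ^ 3)
    (hRode : ∀ t, deriv (deriv R) t =
      100 * a ^ 2 / R t ^ 3 - 25 / R t ^ 2
        - 200 * R t / Real.sqrt (R t ^ 2 + 4 * F t ^ 2) ^ 3)
    (c : ℝ) (hFc : F c = 0) (hRc : deriv R c = 0) :
    ∀ t : ℝ, F (2 * c - t) = -F t ∧ R (2 * c - t) = R t := by
  have h2 : ((2:ℕ) : WithTop ℕ∞) = 1 + 1 := by norm_num
  have hF1 : ContDiff ℝ 1 (deriv F) := (contDiff_succ_iff_deriv.mp (h2 ▸ hF)).2.2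
  have hR1 : ContDiff ℝ 1 (deriv R) := (contDiff_succ_iff_deriv.mp (h2 ▸ hR)).2.2
  have hFd : Differentiable ℝ F := hF.differentiable (by norm_num)
  have hRd : Differentiable ℝ R := hR.differentiable (by norm_num)
  have hFd1 : Differentiable ℝ (deriv F) := hF1.differentiable one_ne_zero
  have hRd1 : Differentiable ℝ (deriv R) := hR1.differentiable one_ne_zero
  set x : ℝ → ℝ × ℝ × ℝ × ℝ := fun t => (F t, deriv F t, R t, deriv R t) with hxdef
  set y : ℝ → ℝ × ℝ × ℝ × ℝ :=
    fun t => (-F (2 * c - t), deriv F (2 * c - t),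
      R (2 * c - t), -deriv R (2 * c - t)) with hydef
  have hx : ∀ t, HasDerivAt x (odeVF a (x t)) t := by
    intro t
    have e1 : HasDerivAt F (deriv F t) t := (hFd t).hasDerivAt
    have e2 : HasDerivAt (deriv F) (deriv (deriv F) t) t := (hFd1 t).hasDerivAt
    have e3 : HasDerivAt R (deriv R t) t := (hRd t).hasDerivAt
    have e4 : HasDerivAt (deriv R) (deriv (deriv R) t) t := (hRd1 t).hasDerivAt
    rw [hFode] at e2; rw [hRode] at e4
    exact e1.prodMk (e2.prodMk (e3.prodMk e4))
  have hlin : ∀ t : ℝ, HasDerivAt (fun s : ℝ => 2 * c - s) (-1) t := by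
    intro t; simpa using (hasDerivAt_id t).const_sub (2 * c)
  have hy : ∀ t, HasDerivAt y (odeVF a (y t)) t := by
    intro t
    have e1 : HasDerivAt (fun s => F (2 * c - s)) (deriv F (2 * c - t) * -1) t :=
      HasDerivAt.comp t (hFd _).hasDerivAt (hlin t)
    have e2 : HasDerivAt (fun s => deriv F (2 * c - s))
        (deriv (deriv F) (2 * c - t) * -1) t :=
      HasDerivAt.comp t (hFd1 _).hasDerivAt (hlin t)
    have e3 : HasDerivAt (fun s => R (2 * c - s)) (deriv R (2 * c - t) * -1) t :=
      HasDerivAt.comp t (hRd _).hasDerivAt (hlin t)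
    have e4 : HasDerivAt (fun s => deriv R (2 * c - s))
        (deriv (deriv R) (2 * c - t) * -1) t :=
      HasDerivAt.comp t (hRd1 _).hasDerivAt (hlin t)
    have E1 : HasDerivAt (fun s => -F (2 * c - s)) (deriv F (2 * c - t)) t := by
      simpa using e1.fun_neg
    have E2 : HasDerivAt (fun s => deriv F (2 * c - s))
        (-400 * (-F (2 * c - t)) /
          Real.sqrt (R (2 * c - t) ^ 2 + 4 * (-F (2 * c - t)) ^ 2) ^ 3) t := by
      convert e2 using 1
      rw [hFode]; rw [neg_sq]; ring
    have E3 : HasDerivAt (fun s => R (2 * c - s)) (-deriv R (2 * c - t)) t := by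
      simpa using e3
    have E4 : HasDerivAt (fun s => -deriv R (2 * c - s))
        (100 * a ^ 2 / R (2 * c - t) ^ 3 - 25 / R (2 * c - t) ^ 2
          - 200 * R (2 * c - t) /
            Real.sqrt (R (2 * c - t) ^ 2 + 4 * (-F (2 * c - t)) ^ 2) ^ 3) t := by
      have : HasDerivAt (fun s => -deriv R (2 * c - s)) _ t := e4.fun_neg
      convert this using 1
      rw [hRode]; rw [neg_sq]; ring
    exact E1.prodMk (E2.prodMk (E3.prodMk E4))
  have hxcont : Continuous x :=
    (hFd.continuous.prodMk (hFd1.continuous.prodMk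
      (hRd.continuous.prodMk hRd1.continuous)))
  have hycont : Continuous y := by
    have hc : Continuous fun s : ℝ => 2 * c - s := by continuity
    exact ((hFd.continuous.comp hc).neg.prodMk
      ((hFd1.continuous.comp hc).prodMk
        ((hRd.continuous.comp hc).prodMk (hRd1.continuous.comp hc).neg)))
  have hA : {t : ℝ | x t = y t} = Set.univ := by
    have hclosed : IsClosed {t : ℝ | x t = y t} := isClosed_eq hxcont hycont
    have hopen : IsOpen {t : ℝ | x t = y t} := by
      rw [isOpen_iff_mem_nhds]
      intro t₁ ht₁
      have hposx : 0 < (x t₁).2.2.1 := hRpos t₁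
      obtain ⟨K, s, hs, hls⟩ := (odeVF_contDiffAt a (x t₁) hposx).exists_lipschitzOnWith
      have hsy : s ∈ nhds (y t₁) := by rw [← ht₁]; exact hs
      have hfx : ∀ᶠ t in nhds t₁, HasDerivAt x (odeVF a (x t)) t ∧ x t ∈ s :=
        (hxcont.continuousAt.eventually_mem hs).mono fun t ht => ⟨hx t, ht⟩
      have hfy : ∀ᶠ t in nhds t₁, HasDerivAt y (odeVF a (y t)) t ∧ y t ∈ s :=
        (hycont.continuousAt.eventually_mem hsy).mono fun t ht => ⟨hy t, ht⟩
      have heq : x =ᶠ[nhds t₁] y :=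
        ODE_solution_unique_of_eventually (v := fun _ => odeVF a) (s := fun _ => s)
          (Filter.Eventually.of_forall fun _ => hls) hfx hfy ht₁
      exact heq
    rcases isClopen_iff.mp ⟨hclosed, hopen⟩ with h | h
    · exfalso
      have hc : c ∈ {t : ℝ | x t = y t} := by
        simp only [Set.mem_setOf_eq, hxdef, hydef]
        have : 2 * c - c = c := by ring
        rw [this, hFc, hRc]
        norm_num
      rw [h] at hc; exact hc
    · exact h
  intro t
  have ht : x t = y t := by
    have : t ∈ {t : ℝ | x t = y t} := by rw [hA]; trivial
    exact this
  constructor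
  · have := congrArg Prod.fst ht
    simp only [hxdef, hydef] at this
    linarith [this]
  · have := congrArg (fun p : ℝ × ℝ × ℝ × ℝ => p.2.2.1) ht
    simp only [hxdef, hydef] at this
    exact this.symm

/-- odd solutions are periodic with period `2 T`. -/
theorem odd_periodic
    (a b : ℝ) (F R : ℝ → ℝ)
    (hF : ContDiff ℝ 2 F) (hR : ContDiff ℝ 2 R)
    (hRpos : ∀ t, 0 < R t)
    (hFode : ∀ t, deriv (deriv F) t =
      -400 * F t / Real.sqrt (R t ^ 2 + 4 * F t ^ 2) ^ 3)
    (hRode : ∀ t, deriv (deriv R) t =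
      100 * a ^ 2 / R t ^ 3 - 25 / R t ^ 2
        - 200 * R t / Real.sqrt (R t ^ 2 + 4 * F t ^ 2) ^ 3)
    (hF0 : F 0 = 0) (hR0 : deriv R 0 = 0)
    (T : ℝ) (hFT : F T = 0) (hRT : deriv R T = 0) :
    ∀ t : ℝ, F (t + 2 * T) = F t ∧ R (t + 2 * T) = R t := by
  have h0 := odd_reflect a F R hF hR hRpos hFode hRode 0 hF0 hR0
  have hT := odd_reflect a F R hF hR hRpos hFode hRode T hFT hRT
  intro t
  have e1 := (hT (-t)).1
  have e2 := (h0 t).1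
  have e3 := (hT (-t)).2
  have e4 := (h0 t).2
  have r1 : 2 * T - -t = t + 2 * T := by ring
  have r2 : 2 * 0 - t = -t := by ring
  rw [r1] at e1 e3; rw [r2] at e2 e4
  constructor
  · rw [e1, e2, neg_neg]
  · rw [e3, e4]
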